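/- Let m ≥ 1 and let D = diag(λ₁,…,λ_m) be a real diagonal m×m matrix with λ₁ > λ₂ > … > λ_m > 0 (distinct positive entries). If V is a complex m×m unitary matrix satisfying VᵀDV = D, then V is a diagonal matrix each of whose diagonal entries is 1 or −1. -/

import Mathlib

open Matrix

/-- If `D = diag(λ₁,…,λ_m)` with `λ₁ > … > λ_m > 0` and `V` is unitary with
`VᵀDV = D`, then `V` is diagonal with diagonal entries `±1`. -/
theorem unitary_preserving_distinct_positive_diagonal
    (m : ℕ) (hm : 1 ≤ m)
    (lam : Fin m → ℝ)
    (hpos : ∀ i, 0 < lam i)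
    (hstrict : ∀ i j : Fin m, i < j → lam j < lam i)
    (V : Matrix (Fin m) (Fin m) ℂ) (hV : V ∈ Matrix.unitaryGroup (Fin m) ℂ)
    (hVD : Vᵀ * Matrix.diagonal (fun i => (lam i : ℂ)) * V
          = Matrix.diagonal (fun i => (lam i : ℂ))) :
    (∀ i j : Fin m, i ≠ j → V i j = 0) ∧ (∀ i : Fin m, V i i = 1 ∨ V i i = -1) := by
  set D := Matrix.diagonal (fun i => (lam i : ℂ)) with hD
  have hVV : V * star V = 1 := Matrix.mem_unitaryGroup_iff.mp hV
  have hVV' : star V * V = 1 := Matrix.mem_unitaryGroup_iff'.mp hV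
  have h1 : Vᵀ * D = D * star V := by
    calc Vᵀ * D = Vᵀ * D * 1 := (mul_one _).symm
    _ = Vᵀ * D * (V * star V) := by rw [hVV]
    _ = (Vᵀ * D * V) * star V := (mul_assoc _ _ _).symm
    _ = D * star V := by rw [hVD]
  have key : ∀ i j, V j i * (lam j : ℂ) = (lam i : ℂ) * star (V j i) := by
    intro i j
    have := congrFun (congrFun h1 i) j
    simpa [hD, Matrix.mul_diagonal, Matrix.diagonal_mul, Matrix.transpose_apply,
      Matrix.star_apply] using this
  have hne : ∀ i j : Fin m, i ≠ j → lam i ≠ lam j := by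
    intro i j hij
    rcases lt_or_gt_of_ne hij with h | h
    · exact (hstrict i j h).ne'
    · exact (hstrict j i h).ne
  have hoff : ∀ i j : Fin m, i ≠ j → V i j = 0 := by
    intro i j hij
    by_contra h0
    have hk := key j i
    have hnorm : ‖V i j‖ * lam i = lam j * ‖V i j‖ := by
      have h2 := congrArg (fun z : ℂ => ‖z‖) hk
      simpa [norm_mul, Complex.norm_real, Complex.star_def, Complex.norm_conj, Real.norm_eq_abs,
        abs_of_pos (hpos i), abs_of_pos (hpos j)] using h2
    have habs : ‖V i j‖ ≠ 0 := by
      simpa using h0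
    have : lam i = lam j := by
      have h3 : ‖V i j‖ * lam i = ‖V i j‖ * lam j := by
        linarith [hnorm]
      exact mul_left_cancel₀ habs h3
    exact hne i j hij this
  refine ⟨hoff, fun i => ?_⟩
  have hreal : V i i = star (V i i) := by
    have hk := key i i
    have hlam : (lam i : ℂ) ≠ 0 := by
      exact_mod_cast (hpos i).ne'
    have : (lam i : ℂ) * V i i = (lam i : ℂ) * star (V i i) := by
      rw [mul_comm] at hk; exact hk
    exact mul_left_cancel₀ hlam this
  have hsum := congrFun (congrFun hVV' i) i
  rw [Matrix.mul_apply] at hsum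
  have hsum2 : star (V i i) * V i i = 1 := by
    have : (∑ k, (star V) i k * V k i) = star (V i i) * V i i := by
      rw [Finset.sum_eq_single i]
      · simp [Matrix.star_apply]
      · intro k _ hk
        rw [hoff k i hk]
        simp
      · simp
    rw [this] at hsum
    simpa using hsum
  rw [← hreal] at hsum2
  exact mul_self_eq_one_iff.mp hsum2
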